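/- Let M be a set of paths in ℝ^d that is closed under concatenation: X ⊔ Y ∈ M for all X, Y ∈ M. Then I := ℐ(M) is a coideal of the deconcatenation coproduct in the sense that Δx ∈ I⊗T(ℝ^d) + T(ℝ^d)⊗I for every x ∈ I. -/

import Mathlib

open scoped BigOperators TensorProduct

namespace PathVarieties

/-- Words over an alphabet `α`; the letters `{1,…,d}` of `ℝ^d` correspond to `α = Fin d`. -/
abbrev Word (α : Type*) := List α

/-- The tensor algebra `T(ℝ^d)`, identified with the free real vector space on words. -/
abbrev TA (α : Type*) := Word α →₀ ℝ

/-- The list of all (riffle) shuffles of two words. -/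
def shuffles {α : Type*} : Word α → Word α → List (Word α)
  | [], v => [v]
  | a :: u, [] => [a :: u]
  | a :: u, b :: v =>
      ((shuffles u (b :: v)).map (a :: ·)) ++ ((shuffles (a :: u) v).map (b :: ·))
termination_by u v => u.length + v.length
decreasing_by all_goals (simp only [List.length_cons]; omega)

/-- Shuffle product of two words, as an element of `T(ℝ^d)`. -/
noncomputable def shw {α : Type*} (u v : Word α) : TA α :=
  ((shuffles u v).map fun w => Finsupp.single w (1 : ℝ)).sum

/-- The shuffle product `⧢` on `T(ℝ^d)`, the bilinear extension of the shuffle of words. -/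
noncomputable def sh {α : Type*} (x y : TA α) : TA α :=
  x.sum fun u cu => y.sum fun v cv => (cu * cv) • shw u v

/-- Right halfshuffle `u ≻ v` of words (`v` nonempty): shuffle `u` with `v` minus its
last letter, then append the last letter of `v`.  (This is the unique bilinear operation
with `w ≻ a = wa` and `w ≻ (va) = (w≻v + v≻w)a`.) -/
noncomputable def rshw {α : Type*} (u v : Word α) : TA α :=
  ((shuffles u v.dropLast).map fun w =>
    Finsupp.single (w ++ v.drop (v.length - 1)) (1 : ℝ)).sum

/-- Right halfshuffle `≻` on `T^{≥1}(ℝ^d)`, extended bilinearly. -/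
noncomputable def rsh {α : Type*} (x y : TA α) : TA α :=
  x.sum fun u cu => y.sum fun v cv => (cu * cv) • rshw u v

/-- Left halfshuffle `u ≺ v` of words (`u` nonempty): the first letter of `u` followed by
the shuffle of the rest of `u` with `v`.  (This is the unique bilinear operation with
`a ≺ w = aw` and `(av) ≺ w = a(w≺v + v≺w)`.) -/
noncomputable def lshw {α : Type*} (u v : Word α) : TA α :=
  ((shuffles u.tail v).map fun w => Finsupp.single (u.take 1 ++ w) (1 : ℝ)).sum

/-- Left halfshuffle `≺` on `T^{≥1}(ℝ^d)`, extended bilinearly. -/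
noncomputable def lsh {α : Type*} (x y : TA α) : TA α :=
  x.sum fun u cu => y.sum fun v cv => (cu * cv) • lshw u v

/-- The antipode `𝒜`, with `𝒜(i₁⋯iₙ) = (−1)ⁿ iₙ⋯i₁`. -/
noncomputable def antipode {α : Type*} (x : TA α) : TA α :=
  x.sum fun w c => Finsupp.single w.reverse (((-1 : ℝ) ^ w.length) * c)

/-- Helper for `Λ_B`: value on a reversed word. -/
noncomputable def lamRev {α β : Type*} (B : α → TA β) : Word α → TA β
  | [] => Finsupp.single [] 1
  | [i] => B i
  | i :: w => rsh (lamRev B w) (B i)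

/-- `Λ_B` on a word: `Λ_B e = e`, `Λ_B i = B i`, `Λ_B (w·i) = (Λ_B w) ≻ (Λ_B i)`. -/
noncomputable def lamW {α β : Type*} (B : α → TA β) (w : Word α) : TA β :=
  lamRev B w.reverse

/-- The linear map `Λ_B : T(ℝ^t) → T(ℝ^d)` induced by `B` on letters. -/
noncomputable def Lam {α β : Type*} (B : α → TA β) (x : TA α) : TA β :=
  x.sum fun w c => c • lamW B w

/-- `splitEmb e j n w = Σ_{w = u₁⋯uₙ} e_j(u₁) ⧢ e_{j+1}(u₂) ⧢ ⋯ ⧢ e_{j+n−1}(uₙ)`,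
the sum over all splittings of `w` into `n` consecutive (possibly empty) factors,
each factor relabelled letterwise by `e`. -/
noncomputable def splitEmb {α β : Type*} (e : ℕ → α → β) : ℕ → ℕ → Word α → TA β
  | _, 0, w => if w.isEmpty then Finsupp.single ([] : Word β) (1 : ℝ) else 0
  | j, k + 1, w => ∑ m ∈ Finset.range (w.length + 1),
      sh (Finsupp.single ((w.take m).map (e j)) (1 : ℝ)) (splitEmb e (j + 1) k (w.drop m))

/-- `Σ_{x=uv} f(u)·v`: deconcatenate, evaluate the functional `f` on prefixes. -/
noncomputable def leftAct {α : Type*} (f : Word α → ℝ) (x : TA α) : TA α :=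
  x.sum fun w c => c • ∑ k ∈ Finset.range (w.length + 1),
    f (w.take k) • Finsupp.single (w.drop k) (1 : ℝ)

/-- `Σ_{x=uv} u·f(v)`: deconcatenate, evaluate the functional `f` on suffixes. -/
noncomputable def rightAct {α : Type*} (f : Word α → ℝ) (x : TA α) : TA α :=
  x.sum fun w c => c • ∑ k ∈ Finset.range (w.length + 1),
    f (w.drop k) • Finsupp.single (w.take k) (1 : ℝ)

/-- A raw path: a time horizon `T` together with a map `ℝ → ℝ^α`
(only the restriction to `[0,T]` is relevant). -/
structure RawPath (α : Type*) where
  T : ℝ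
  toFun : ℝ → α → ℝ

/-- A path: positive time horizon, continuous on `[0,T]` and piecewise continuously
differentiable there (witnessed by a partition `0 = τ₀ < τ₁ < ⋯ < τₙ = T`). -/
def IsPath {α : Type*} (X : RawPath α) : Prop :=
  0 < X.T ∧ (∀ i, ContinuousOn (fun t => X.toFun t i) (Set.Icc 0 X.T)) ∧
    ∃ (n : ℕ) (τ : Fin (n + 1) → ℝ), StrictMono τ ∧ τ 0 = 0 ∧ τ (Fin.last n) = X.T ∧
      ∀ (k : Fin n) (i : α), ContDiffOn ℝ 1 (fun t => X.toFun t i)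
        (Set.Icc (τ k.castSucc) (τ k.succ))

/-- Iterated integrals, by recursion on the reversed word:
`sigRev X (i :: w) t = ∫₀ᵗ ⟨σ(X)ₛ, w.reverse⟩ dX⁽ⁱ⁾(s)`. -/
noncomputable def sigRev {α : Type*} (X : ℝ → α → ℝ) : Word α → ℝ → ℝ
  | [], _ => 1
  | i :: w, t => ∫ s in (0 : ℝ)..t, sigRev X w s * deriv (fun u => X u i) s

/-- `⟨σ(X)_t, w⟩`, the iterated-integrals signature of `X` stopped at time `t`. -/
noncomputable def sigUpTo {α : Type*} (X : RawPath α) (t : ℝ) (w : Word α) : ℝ :=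
  sigRev X.toFun w.reverse t

/-- `⟨σ(X), w⟩`, the iterated-integrals signature of the path `X` at a word `w`. -/
noncomputable def sig {α : Type*} (X : RawPath α) (w : Word α) : ℝ :=
  sigUpTo X X.T w

/-- Pairing of a word-indexed functional with an element of `T(ℝ^d)`. -/
noncomputable def pairF {α : Type*} (f : Word α → ℝ) (x : TA α) : ℝ :=
  x.sum fun w c => c * f w

/-- `⟨σ(X), x⟩` for a tensor `x ∈ T(ℝ^d)` (linear in `x`). -/
noncomputable def pair {α : Type*} (X : RawPath α) (x : TA α) : ℝ :=
  Finsupp.linearCombination ℝ (sig X) x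

/-- The path variety `𝒱(W)` of all paths whose signature kills every element of `W`. -/
def V {α : Type*} (W : Set (TA α)) : Set (RawPath α) :=
  {X | IsPath X ∧ ∀ x ∈ W, pair X x = 0}

/-- `ℐ(M)`, the space of tensors killed by the signature of every path in `M`. -/
noncomputable def Idl {α : Type*} (M : Set (RawPath α)) : Submodule ℝ (TA α) :=
  ⨅ X ∈ M, LinearMap.ker (Finsupp.linearCombination ℝ (sig X))

/-- Concatenation `X ⊔ Y` of paths. -/
noncomputable def concat {α : Type*} (X Y : RawPath α) : RawPath α where
  T := X.T + Y.T
  toFun := fun t i =>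
    if t ≤ X.T then X.toFun t i else Y.toFun (t - X.T) i + X.toFun X.T i - Y.toFun 0 i

/-- Time reversal `⟵X`. -/
def timeRev {α : Type*} (X : RawPath α) : RawPath α :=
  ⟨X.T, fun t i => X.toFun (X.T - t) i⟩

/-- `concatIter X n = X^{⊔(n+1)}`. -/
noncomputable def concatIter {α : Type*} (X : RawPath α) : ℕ → RawPath α
  | 0 => X
  | n + 1 => concat (concatIter X n) X

/-- `X^{⊔n}`, the `n`-fold concatenation of `X` with itself (intended for `n ≥ 1`). -/
noncomputable def concatPow {α : Type*} (X : RawPath α) (n : ℕ) : RawPath α :=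
  concatIter X (n - 1)

/-- `concatFold f k = f 0 ⊔ f 1 ⊔ ⋯ ⊔ f k`. -/
noncomputable def concatFold {α : Type*} (f : ℕ → RawPath α) : ℕ → RawPath α
  | 0 => f 0
  | k + 1 => concat (concatFold f k) (f (k + 1))

/-- The deconcatenation coproduct `Δ : T(ℝ^d) → T(ℝ^d) ⊗ T(ℝ^d)`,
`Δw = Σ_{w=uv} u ⊗ v`. -/
noncomputable def deconc {α : Type*} (x : TA α) : TensorProduct ℝ (TA α) (TA α) :=
  x.sum fun w c => c • ∑ k ∈ Finset.range (w.length + 1),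
    (Finsupp.single (w.take k) (1 : ℝ)) ⊗ₜ[ℝ] (Finsupp.single (w.drop k) (1 : ℝ))


section Aux

open MeasureTheory intervalIntegral Set Interval

lemma ae_ne_vol (c : ℝ) : ∀ᵐ x : ℝ, x ≠ c := by
  rw [MeasureTheory.ae_iff]
  simpa using Real.volume_singleton (a := c)

variable {α : Type*}

lemma deriv_II_piece {f : ℝ → ℝ} {a b : ℝ} (hab : a < b)
    (h : ContDiffOn ℝ 1 f (Icc a b)) :
    IntervalIntegrable (deriv f) volume a b := by
  have hg : ContinuousOn (derivWithin f (Icc a b)) (Icc a b) :=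
    h.continuousOn_derivWithin (uniqueDiffOn_Icc hab) le_rfl
  have hgI : IntervalIntegrable (derivWithin f (Icc a b)) volume a b := by
    apply ContinuousOn.intervalIntegrable
    rwa [uIcc_of_le hab.le]
  apply hgI.congr_ae
  have h1 : ∀ᵐ x ∂(volume.restrict (Ι a b)), x ∈ Ι a b :=
    ae_restrict_mem measurableSet_uIoc
  have h2 : ∀ᵐ x ∂(volume.restrict (Ι a b)), x ≠ b := ae_restrict_of_ae (ae_ne_vol b)
  filter_upwards [h1, h2] with x hx hxb
  have hx' : x ∈ Ioo a b := by
    rw [uIoc_of_le hab.le] at hx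
    exact ⟨hx.1, lt_of_le_of_ne hx.2 hxb⟩
  exact derivWithin_of_mem_nhds (Icc_mem_nhds hx'.1 hx'.2)

lemma deriv_II {X : RawPath α} (h : IsPath X) (i : α) :
    IntervalIntegrable (deriv (fun u => X.toFun u i)) volume 0 X.T := by
  obtain ⟨hT, _, n, τ, hmono, h0, hlast, hpieces⟩ := h
  have key : ∀ m : ℕ, ∀ hm : m < n + 1,
      IntervalIntegrable (deriv (fun u => X.toFun u i)) volume (τ 0) (τ ⟨m, hm⟩) := by
    intro m
    induction m with
    | zero => intro hm; simp [IntervalIntegrable.refl]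
    | succ m ih =>
      intro hm
      have hm' : m < n + 1 := Nat.lt_of_succ_lt hm
      have hmn : m < n := Nat.lt_of_succ_lt_succ hm
      refine (ih hm').trans ?_
      have := deriv_II_piece (f := fun u => X.toFun u i)
        (hmono (show (⟨m, hm'⟩ : Fin (n+1)) < ⟨m+1, hm⟩ by simp [Fin.lt_def]))
        (by simpa [Fin.castSucc, Fin.succ] using hpieces ⟨m, hmn⟩ i)
      simpa using this
  have := key n (Nat.lt_succ_self n)
  rw [h0] at this
  have hl : τ ⟨n, Nat.lt_succ_self n⟩ = X.T := by simpa [Fin.last] using hlast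
  rwa [hl] at this


lemma sigRev_continuousOn {X : RawPath α} (h : IsPath X) :
    ∀ w : Word α, ContinuousOn (sigRev X.toFun w) (Icc 0 X.T)
  | [] => by simpa [sigRev] using continuousOn_const
  | i :: w => by
    have hII : IntervalIntegrable
        (fun s => sigRev X.toFun w s * deriv (fun u => X.toFun u i) s) volume 0 X.T := by
      apply (deriv_II h i).continuousOn_mul
      rw [uIcc_of_le h.1.le]
      exact sigRev_continuousOn h w
    have := continuousOn_primitive_interval' hII left_mem_uIcc
    rw [uIcc_of_le h.1.le] at this
    exact this

lemma sigRev_mul_deriv_II {X : RawPath α} (h : IsPath X) (w : Word α) (i : α) :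
    IntervalIntegrable
      (fun s => sigRev X.toFun w s * deriv (fun u => X.toFun u i) s) volume 0 X.T := by
  apply (deriv_II h i).continuousOn_mul
  rw [uIcc_of_le h.1.le]
  exact sigRev_continuousOn h w

lemma sigRev_congr {F G : ℝ → α → ℝ} {T1 : ℝ} (hT1 : 0 ≤ T1)
    (hFG : ∀ i, Set.EqOn (fun t => F t i) (fun t => G t i) (Iio T1)) :
    ∀ (ρ : Word α), ∀ s ≤ T1, sigRev F ρ s = sigRev G ρ s
  | [], s, _ => rfl
  | i :: ρ, s, hs => by
    show (∫ r in (0:ℝ)..s, sigRev F ρ r * deriv (fun u => F u i) r) =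
      ∫ r in (0:ℝ)..s, sigRev G ρ r * deriv (fun u => G u i) r
    apply intervalIntegral.integral_congr_ae
    filter_upwards [ae_ne_vol T1] with x hxne hx
    have hxlt : x < T1 := by
      rcases le_total 0 s with h0s | h0s
      · rw [uIoc_of_le h0s] at hx
        exact lt_of_le_of_ne (hx.2.trans hs) hxne
      · rw [uIoc_of_ge h0s] at hx
        exact lt_of_le_of_ne (hx.2.trans hT1) hxne
    have hd : deriv (fun u => F u i) x = deriv (fun u => G u i) x := by
      apply Filter.EventuallyEq.deriv_eq
      filter_upwards [Iio_mem_nhds hxlt] with y hy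
      exact hFG i hy
    rw [sigRev_congr hT1 hFG ρ x hxlt.le, hd]


lemma concat_deriv_right {X Y : RawPath α} {s : ℝ} (hs : X.T < s) (i : α) :
    deriv (fun u => (concat X Y).toFun u i) s = deriv (fun u => Y.toFun u i) (s - X.T) := by
  have h1 : (fun u => (concat X Y).toFun u i) =ᶠ[nhds s]
      (fun u => (fun v => Y.toFun v i + (X.toFun X.T i - Y.toFun 0 i)) (u - X.T)) := by
    filter_upwards [Ioi_mem_nhds hs] with u hu
    have : ¬ (u ≤ X.T) := not_le.2 hu
    simp only [concat, this, if_false]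
    ring
  rw [h1.deriv_eq,
    deriv_comp_sub_const (f := fun v => Y.toFun v i + (X.toFun X.T i - Y.toFun 0 i)),
    deriv_add_const]

lemma chen_aux {X Y : RawPath α} (hX : IsPath X) (hY : IsPath Y) :
    ∀ (ρ : Word α) (t : ℝ), t ∈ Icc 0 Y.T →
      sigRev (concat X Y).toFun ρ (X.T + t) =
        ∑ k ∈ Finset.range (ρ.length + 1),
          sigRev Y.toFun (ρ.take k) t * sigRev X.toFun (ρ.drop k) X.T
  | [], t, ht => by simp [sigRev]
  | i :: ρ, t, ht => by
    have hT1 : 0 < X.T := hX.1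
    set T1 := X.T with hT1def
    set Z := concat X Y with hZdef
    have hEq : ∀ j, Set.EqOn (fun u => Z.toFun u j) (fun u => X.toFun u j) (Iio T1) := by
      intro j u hu
      simp only [hZdef, concat, (le_of_lt hu : u ≤ X.T), if_true]
    -- pointwise comparison on the left piece
    have hptZX : ∀ x, x ∈ Ι (0:ℝ) T1 → x ≠ T1 →
        sigRev Z.toFun ρ x * deriv (fun u => Z.toFun u i) x =
        sigRev X.toFun ρ x * deriv (fun u => X.toFun u i) x := by
      intro x hx hxne
      rw [uIoc_of_le hT1.le] at hx
      have hxlt : x < T1 := lt_of_le_of_ne hx.2 hxne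
      rw [sigRev_congr hT1.le hEq ρ x hxlt.le]
      congr 1
      apply Filter.EventuallyEq.deriv_eq
      filter_upwards [Iio_mem_nhds hxlt] with y hy
      exact hEq i hy
    have hIIX : IntervalIntegrable
        (fun s => sigRev X.toFun ρ s * deriv (fun u => X.toFun u i) s) volume 0 T1 :=
      sigRev_mul_deriv_II hX ρ i
    have hII1 : IntervalIntegrable
        (fun s => sigRev Z.toFun ρ s * deriv (fun u => Z.toFun u i) s) volume 0 T1 := by
      apply hIIX.congr_ae
      filter_upwards [ae_restrict_mem measurableSet_uIoc, ae_restrict_of_ae (ae_ne_vol T1)]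
        with x hx hxne
      exact (hptZX x hx hxne).symm
    -- right piece
    set H0 : ℝ → ℝ := fun r => ∑ k ∈ Finset.range (ρ.length + 1),
      sigRev X.toFun (ρ.drop k) T1 *
        (sigRev Y.toFun (ρ.take k) r * deriv (fun u => Y.toFun u i) r) with hH0def
    have hIIH0 : ∀ a b : ℝ, a ∈ Icc 0 Y.T → b ∈ Icc 0 Y.T →
        IntervalIntegrable H0 volume a b := by
      intro a b ha hb
      rw [hH0def]
      have : IntervalIntegrable (∑ k ∈ Finset.range (ρ.length + 1), fun r =>
          sigRev X.toFun (ρ.drop k) T1 *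
            (sigRev Y.toFun (ρ.take k) r * deriv (fun u => Y.toFun u i) r)) volume a b := by
        apply IntervalIntegrable.sum
        intro k _
        apply IntervalIntegrable.const_mul
        apply (sigRev_mul_deriv_II hY (ρ.take k) i).mono_set
        rw [uIcc_of_le hY.1.le]
        exact uIcc_subset_Icc ha hb
      have e : (∑ k ∈ Finset.range (ρ.length + 1), fun r =>
          sigRev X.toFun (ρ.drop k) T1 *
            (sigRev Y.toFun (ρ.take k) r * deriv (fun u => Y.toFun u i) r))
          = fun r => ∑ k ∈ Finset.range (ρ.length + 1),
            sigRev X.toFun (ρ.drop k) T1 *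
              (sigRev Y.toFun (ρ.take k) r * deriv (fun u => Y.toFun u i) r) := by
        funext r
        simp
      rwa [e] at this
    have hptZH : ∀ s, s ∈ Ι T1 (T1 + t) →
        sigRev Z.toFun ρ s * deriv (fun u => Z.toFun u i) s = H0 (s - T1) := by
      intro s hs
      rw [uIoc_of_le (by linarith [ht.1] : T1 ≤ T1 + t)] at hs
      have h1 : sigRev Z.toFun ρ s = ∑ k ∈ Finset.range (ρ.length + 1),
          sigRev Y.toFun (ρ.take k) (s - T1) * sigRev X.toFun (ρ.drop k) T1 := by
        have := chen_aux hX hY ρ (s - T1)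
          ⟨by linarith [hs.1], by linarith [hs.2, ht.2]⟩
        rwa [show T1 + (s - T1) = s by ring] at this
      rw [h1, concat_deriv_right (show X.T < s from hs.1) i, hH0def, Finset.sum_mul]
      apply Finset.sum_congr rfl
      intro k _
      ring
    have hII2 : IntervalIntegrable
        (fun s => sigRev Z.toFun ρ s * deriv (fun u => Z.toFun u i) s) volume T1 (T1 + t) := by
      have hbase : IntervalIntegrable (fun s => H0 (s - T1)) volume T1 (T1 + t) := by
        have := (hIIH0 0 t (left_mem_Icc.2 hY.1.le) ht).comp_sub_right T1
        simpa [add_comm] using this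
      apply hbase.congr_ae
      filter_upwards [ae_restrict_mem measurableSet_uIoc] with x hx
      exact (hptZH x hx).symm
    -- combine
    show (∫ s in (0:ℝ)..(T1 + t),
        sigRev Z.toFun ρ s * deriv (fun u => Z.toFun u i) s) = _
    rw [← intervalIntegral.integral_add_adjacent_intervals hII1 hII2]
    have hv1 : (∫ s in (0:ℝ)..T1, sigRev Z.toFun ρ s * deriv (fun u => Z.toFun u i) s)
        = sigRev X.toFun (i :: ρ) T1 := by
      show _ = ∫ s in (0:ℝ)..T1, sigRev X.toFun ρ s * deriv (fun u => X.toFun u i) s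
      apply intervalIntegral.integral_congr_ae
      filter_upwards [ae_ne_vol T1] with x hxne hx
      exact hptZX x hx hxne
    have hv2 : (∫ s in T1..(T1 + t), sigRev Z.toFun ρ s * deriv (fun u => Z.toFun u i) s)
        = ∑ k ∈ Finset.range (ρ.length + 1),
            sigRev X.toFun (ρ.drop k) T1 * sigRev Y.toFun (i :: ρ.take k) t := by
      have e1 : (∫ s in T1..(T1 + t), sigRev Z.toFun ρ s * deriv (fun u => Z.toFun u i) s)
          = ∫ s in T1..(T1 + t), H0 (s - T1) := by
        apply intervalIntegral.integral_congr_ae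
        filter_upwards with x hx
        exact hptZH x hx
      rw [e1, intervalIntegral.integral_comp_sub_right H0 T1]
      have e2 : T1 - T1 = (0:ℝ) := by ring
      have e3 : T1 + t - T1 = t := by ring
      rw [e2, e3, hH0def]
      have e4 : (∫ r in (0:ℝ)..t, ∑ k ∈ Finset.range (ρ.length + 1),
          sigRev X.toFun (ρ.drop k) T1 *
            (sigRev Y.toFun (ρ.take k) r * deriv (fun u => Y.toFun u i) r))
          = ∑ k ∈ Finset.range (ρ.length + 1), ∫ r in (0:ℝ)..t,
            sigRev X.toFun (ρ.drop k) T1 *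
              (sigRev Y.toFun (ρ.take k) r * deriv (fun u => Y.toFun u i) r) := by
        apply intervalIntegral.integral_finset_sum
        intro k _
        apply IntervalIntegrable.const_mul
        apply (sigRev_mul_deriv_II hY (ρ.take k) i).mono_set
        rw [uIcc_of_le hY.1.le]
        exact uIcc_subset_Icc (left_mem_Icc.2 hY.1.le) ht
      rw [e4]
      apply Finset.sum_congr rfl
      intro k _
      rw [intervalIntegral.integral_const_mul]
      rfl
    rw [hv1, hv2]
    simp only [List.length_cons]
    rw [Finset.sum_range_succ' (fun k => sigRev Y.toFun ((i :: ρ).take k) t *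
      sigRev X.toFun ((i :: ρ).drop k) T1) (ρ.length + 1)]
    simp only [List.take_succ_cons, List.drop_succ_cons, List.take_zero, List.drop_zero]
    show _ = (∑ k ∈ Finset.range (ρ.length + 1),
        sigRev Y.toFun (i :: ρ.take k) t * sigRev X.toFun (ρ.drop k) T1)
      + sigRev Y.toFun [] t * sigRev X.toFun (i :: ρ) T1
    have : sigRev Y.toFun [] t = 1 := rfl
    rw [this, one_mul, add_comm]
    congr 1
    apply Finset.sum_congr rfl
    intro k _
    ring


lemma chen {X Y : RawPath α} (hX : IsPath X) (hY : IsPath Y) (w : Word α) :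
    sig (concat X Y) w =
      ∑ k ∈ Finset.range (w.length + 1), sig X (w.take k) * sig Y (w.drop k) := by
  have h := chen_aux hX hY w.reverse Y.T (right_mem_Icc.2 hY.1.le)
  rw [List.length_reverse] at h
  have hL : sig (concat X Y) w = sigRev (concat X Y).toFun w.reverse (X.T + Y.T) := rfl
  rw [hL, h, ← Finset.sum_range_reflect]
  apply Finset.sum_congr rfl
  intro k hk
  rw [Finset.mem_range, Nat.lt_succ_iff] at hk
  have e1 : w.length + 1 - 1 - k = w.length - k := by omega
  rw [e1, ← List.reverse_drop, ← List.reverse_take]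
  rw [mul_comm]
  rfl


end Aux

section AuxAlg

open scoped TensorProduct

variable {V : Type*} [AddCommGroup V] [Module ℝ V]

noncomputable def bilin (f g : V →ₗ[ℝ] ℝ) : V →ₗ[ℝ] V →ₗ[ℝ] ℝ :=
  LinearMap.mk₂ ℝ (fun a b => f a * g b)
    (fun a a' b => by simp [add_mul])
    (fun c a b => by simp [mul_assoc])
    (fun a b b' => by simp [mul_add])
    (fun c a b => by simp; ring)

@[simp] lemma bilin_apply (f g : V →ₗ[ℝ] ℝ) (a b : V) : bilin f g a b = f a * g b := rfl

/-- The bilinear-in-(f,g) pairing `(f,g) ↦ (u ↦ Σ f(aᵢ)g(bᵢ))`. -/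
noncomputable def pairT : (V →ₗ[ℝ] ℝ) →ₗ[ℝ] (V →ₗ[ℝ] ℝ) →ₗ[ℝ] (TensorProduct ℝ V V →ₗ[ℝ] ℝ) :=
  (TensorProduct.mk ℝ (Module.Dual ℝ V) (Module.Dual ℝ V)).compr₂
    (TensorProduct.dualDistrib ℝ V V)

lemma pairT_eq (f g : V →ₗ[ℝ] ℝ) : pairT f g = TensorProduct.lift (bilin f g) := by
  apply TensorProduct.ext'
  intro a b
  simp [pairT, TensorProduct.dualDistrib_apply]

/-- Dual family for a separating space of functionals, on a finite set of basis vectors. -/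
lemma exists_dual_family (G : Submodule ℝ (V →ₗ[ℝ] ℝ))
    (hsep : ∀ v : V, (∀ f ∈ G, f v = 0) → v = 0)
    {ι : Type*} [DecidableEq ι] (b : Module.Basis ι ℝ V) (t : Finset ι) (i : ι) (hi : i ∈ t) :
    ∃ f ∈ G, ∀ j ∈ t, f (b j) = if j = i then 1 else 0 := by
  classical
  set ρ : (V →ₗ[ℝ] ℝ) →ₗ[ℝ] ({x // x ∈ t} → ℝ) :=
    LinearMap.pi (fun j : {x // x ∈ t} => LinearMap.applyₗ (b (j : ι))) with hρ
  set R : Submodule ℝ ({x // x ∈ t} → ℝ) := G.map ρ with hR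
  have hRtop : R = ⊤ := by
    by_contra hRne
    have hann : R.dualAnnihilator ≠ ⊥ := by
      intro h
      apply hRne
      rw [← Subspace.dualAnnihilator_dualCoannihilator_eq (W := R), h,
        Submodule.dualCoannihilator_bot]
    obtain ⟨lam, hlammem, hlamne⟩ := Submodule.exists_mem_ne_zero_of_ne_bot hann
    set c : {x // x ∈ t} → ℝ := fun j => lam (Pi.single j 1) with hc
    set v : V := ∑ j : {x // x ∈ t}, c j • b (j : ι) with hv
    have hlam_eval : ∀ w : {x // x ∈ t} → ℝ, lam w = ∑ j : {x // x ∈ t}, w j * c j := by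
      intro w
      have hw : lam w = lam (∑ j : {x // x ∈ t}, Pi.single j (w j)) := by
        rw [Finset.univ_sum_single]
      rw [hw, map_sum]
      apply Finset.sum_congr rfl
      intro j _
      have h5 : Pi.single j (w j) = w j • (Pi.single j (1:ℝ) : {x // x ∈ t} → ℝ) := by
        rw [← Pi.single_smul, smul_eq_mul, mul_one]
      rw [h5, map_smul, smul_eq_mul, hc]
    have hfv : ∀ f ∈ G, f v = 0 := by
      intro f hf
      have h1 : f v = ∑ j : {x // x ∈ t}, (ρ f) j * c j := by
        rw [hv, map_sum]
        apply Finset.sum_congr rfl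
        intro j _
        rw [map_smul, smul_eq_mul, hρ]
        rw [LinearMap.pi_apply]
        simp [mul_comm]
      rw [h1, ← hlam_eval]
      exact (Submodule.mem_dualAnnihilator lam).mp hlammem (ρ f) (Submodule.mem_map_of_mem hf)
    have hv0 : v = 0 := hsep v hfv
    have hc0 : ∀ j : {x // x ∈ t}, c j = 0 := by
      have hli : LinearIndependent ℝ (fun j : {x // x ∈ t} => b (j : ι)) :=
        b.linearIndependent.comp (fun j : t => (j : ι)) Subtype.val_injective
      exact Fintype.linearIndependent_iff.mp hli c (by rw [← hv]; exact hv0)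
    apply hlamne
    apply LinearMap.ext
    intro w
    rw [hlam_eval w]
    simp [hc0]
  have hδ : (fun j : {x // x ∈ t} => if (j : ι) = i then (1:ℝ) else 0) ∈ R := by
    rw [hRtop]; trivial
  obtain ⟨f, hfG, hf⟩ := Submodule.mem_map.mp hδ
  refine ⟨f, hfG, fun j hj => ?_⟩
  have h6 := congrFun hf ⟨j, hj⟩
  rw [hρ, LinearMap.pi_apply] at h6
  simpa using h6

lemma separating_tensor_eq_zero (F : Set (V →ₗ[ℝ] ℝ))
    (hsep : ∀ v : V, (∀ f ∈ F, f v = 0) → v = 0)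
    (u : TensorProduct ℝ V V)
    (hu : ∀ f ∈ F, ∀ g ∈ F, TensorProduct.lift (bilin f g) u = 0) : u = 0 := by
  classical
  set G : Submodule ℝ (V →ₗ[ℝ] ℝ) := Submodule.span ℝ F with hGdef
  have hsepG : ∀ v : V, (∀ f ∈ G, f v = 0) → v = 0 := by
    intro v hv
    exact hsep v (fun f hf => hv f (Submodule.subset_span hf))
  have huG : ∀ f ∈ G, ∀ g ∈ G, pairT f g u = 0 := by
    intro f hf
    induction hf using Submodule.span_induction with
    | mem f hfF =>
      intro g hg
      induction hg using Submodule.span_induction with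
      | mem g hgF => rw [pairT_eq]; exact hu f hfF g hgF
      | zero => simp
      | add g g' _ _ hg hg' => rw [map_add, LinearMap.add_apply]; rw [hg, hg', add_zero]
      | smul c g _ hg => rw [map_smul, LinearMap.smul_apply, hg, smul_zero]
    | zero => intro g hg; simp
    | add f f' _ _ hf hf' => intro g hg; rw [map_add, LinearMap.add_apply, LinearMap.add_apply,
        hf g hg, hf' g hg, add_zero]
    | smul c f _ hf => intro g hg; rw [map_smul, LinearMap.smul_apply, LinearMap.smul_apply,
        hf g hg, smul_zero]
  set b := Module.Basis.ofVectorSpace ℝ V with hb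
  set B2 := b.tensorProduct b with hB2
  set r := B2.repr u with hr
  have hexp : ∀ f g : V →ₗ[ℝ] ℝ, pairT f g u =
      r.sum fun p c => c * (f (b p.1) * g (b p.2)) := by
    intro f g
    conv_lhs => rw [show u = Finsupp.linearCombination ℝ B2 r from (B2.linearCombination_repr u).symm]
    rw [Finsupp.linearCombination_apply, map_finsuppSum]
    apply Finsupp.sum_congr
    intro p _
    rw [map_smul]
    rw [hB2, Module.Basis.tensorProduct_apply']
    simp [pairT, TensorProduct.dualDistrib_apply, smul_eq_mul]
  have hr0 : ∀ p ∈ r.support, r p = 0 := by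
    intro p hp
    obtain ⟨f, hfG, hf⟩ := exists_dual_family G hsepG b (r.support.image Prod.fst) p.1
      (Finset.mem_image_of_mem Prod.fst hp)
    obtain ⟨g, hgG, hg⟩ := exists_dual_family G hsepG b (r.support.image Prod.snd) p.2
      (Finset.mem_image_of_mem Prod.snd hp)
    have h0 := huG f hfG g hgG
    rw [hexp f g] at h0
    rw [Finsupp.sum] at h0
    rw [Finset.sum_eq_single_of_mem p hp] at h0
    · rw [hf p.1 (Finset.mem_image_of_mem Prod.fst hp), hg p.2 (Finset.mem_image_of_mem Prod.snd hp)]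
        at h0
      simpa using h0
    · intro q hq hqp
      rcases Decidable.em (q.1 = p.1) with h1 | h1
      · have h2 : q.2 ≠ p.2 := fun h2 => hqp (Prod.ext h1 h2)
        rw [hg q.2 (Finset.mem_image_of_mem Prod.snd hq), if_neg h2]
        ring
      · rw [hf q.1 (Finset.mem_image_of_mem Prod.fst hq), if_neg h1]
        ring
  have : r = 0 := by
    ext p
    by_cases hp : p ∈ r.support
    · exact hr0 p hp
    · exact Finsupp.notMem_support_iff.mp hp
  have := hr ▸ this
  exact (LinearEquiv.map_eq_zero_iff B2.repr).mp this


lemma mem_Idl_iff {α : Type*} {M : Set (RawPath α)} {x : TA α} :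
    x ∈ Idl M ↔ ∀ X ∈ M, Finsupp.linearCombination ℝ (sig X) x = 0 := by
  simp [Idl, Submodule.mem_iInf, LinearMap.mem_ker]

lemma lift_bilin_deconc {α : Type*} {X Y : RawPath α} (hX : IsPath X) (hY : IsPath Y)
    (x : TA α) :
    TensorProduct.lift (bilin (Finsupp.linearCombination ℝ (sig X))
      (Finsupp.linearCombination ℝ (sig Y))) (deconc x) =
    Finsupp.linearCombination ℝ (sig (concat X Y)) x := by
  rw [deconc, map_finsuppSum, Finsupp.linearCombination_apply]
  apply Finsupp.sum_congr
  intro w _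
  rw [map_smul, map_sum, chen hX hY w]
  congr 1
  apply Finset.sum_congr rfl
  intro k _
  rw [TensorProduct.lift.tmul, bilin_apply, Finsupp.linearCombination_single,
    Finsupp.linearCombination_single, one_smul, one_smul]

lemma rTensor_mem_map₂_left {α : Type*} {P : Submodule ℝ (TA α)} {p : TA α →ₗ[ℝ] TA α}
    (hp : ∀ v, p v ∈ P) (z : TensorProduct ℝ (TA α) (TA α)) :
    LinearMap.rTensor (TA α) p z ∈
      Submodule.map₂ (TensorProduct.mk ℝ (TA α) (TA α)) P ⊤ := by
  induction z using TensorProduct.induction_on with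
  | zero => simp only [map_zero]; exact Submodule.zero_mem _
  | tmul a b =>
    rw [LinearMap.rTensor_tmul]
    exact Submodule.apply_mem_map₂ _ (hp a) Submodule.mem_top
  | add z1 z2 h1 h2 => rw [map_add]; exact Submodule.add_mem _ h1 h2

lemma lTensor_mem_map₂_right {α : Type*} {P : Submodule ℝ (TA α)} {p : TA α →ₗ[ℝ] TA α}
    (hp : ∀ v, p v ∈ P) (z : TensorProduct ℝ (TA α) (TA α)) :
    LinearMap.lTensor (TA α) p z ∈
      Submodule.map₂ (TensorProduct.mk ℝ (TA α) (TA α)) ⊤ P := by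
  induction z using TensorProduct.induction_on with
  | zero => simp only [map_zero]; exact Submodule.zero_mem _
  | tmul a b =>
    rw [LinearMap.lTensor_tmul]
    exact Submodule.apply_mem_map₂ _ Submodule.mem_top (hp b)
  | add z1 z2 h1 h2 => rw [map_add]; exact Submodule.add_mem _ h1 h2

end AuxAlg

set_option maxHeartbeats 1000000 in
set_option synthInstance.maxHeartbeats 400000 in
/-- If a set `M` of paths is closed under concatenation, then
`I = ℐ(M)` is a coideal of the deconcatenation coproduct:
`Δx ∈ I⊗T(ℝ^d) + T(ℝ^d)⊗I` for every `x ∈ I`. -/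
theorem statement16 {d : ℕ} (M : Set (RawPath (Fin d)))
    (hpath : ∀ X ∈ M, IsPath X)
    (hconc : ∀ X ∈ M, ∀ Y ∈ M, concat X Y ∈ M) :
    ∀ x ∈ Idl M, deconc x ∈
      Submodule.map₂ (TensorProduct.mk ℝ (TA (Fin d)) (TA (Fin d))) (Idl M) ⊤ ⊔
      Submodule.map₂ (TensorProduct.mk ℝ (TA (Fin d)) (TA (Fin d))) ⊤ (Idl M) := by
  intro x hx
  classical
  letI instZ : Zero (TensorProduct ℝ (TA (Fin d)) (TA (Fin d))) :=
    (inferInstance : AddCommMonoid (TensorProduct ℝ (TA (Fin d)) (TA (Fin d)))).toZero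
  set I := Idl M with hI
  obtain ⟨C, hC⟩ := Submodule.exists_isCompl I
  set π : TA (Fin d) →ₗ[ℝ] ↥I := I.linearProjOfIsCompl C hC with hπ
  set p : TA (Fin d) →ₗ[ℝ] TA (Fin d) := I.subtype ∘ₗ π with hpdef
  set q : TA (Fin d) →ₗ[ℝ] TA (Fin d) := LinearMap.id - p with hqdef
  set π' : TA (Fin d) →ₗ[ℝ] ↥C := C.linearProjOfIsCompl I hC.symm with hπ'
  have hpI : ∀ v, p v ∈ I := fun v => (π v).2
  have hpq : p + q = LinearMap.id := by
    rw [hqdef]; abel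
  have hqC : ∀ v, q v = C.subtype (π' v) := by
    intro v
    have hvmem : v ∈ I ⊔ C := by rw [hC.sup_eq_top]; trivial
    obtain ⟨i, hi, c, hc, hsum⟩ := Submodule.mem_sup.mp hvmem
    have hπv : π v = ⟨i, hi⟩ := by
      rw [← hsum, map_add]
      rw [show π i = ⟨i, hi⟩ from Submodule.linearProjOfIsCompl_apply_left hC ⟨i, hi⟩,
        show π c = 0 from Submodule.projectionOnto_apply_of_mem_right hC hc, add_zero]
    have hπ'v : π' v = ⟨c, hc⟩ := by
      rw [← hsum, map_add]
      rw [show π' c = ⟨c, hc⟩ from Submodule.linearProjOfIsCompl_apply_left hC.symm ⟨c, hc⟩,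
        show π' i = 0 from Submodule.projectionOnto_apply_of_mem_right hC.symm hi, zero_add]
    rw [hqdef]
    simp only [LinearMap.sub_apply, LinearMap.id_apply, hpdef, LinearMap.coe_comp,
      Function.comp_apply, hπv, hπ'v, Submodule.coe_subtype]
    rw [← hsum, add_sub_cancel_left]
  have hqeq : q = C.subtype ∘ₗ π' := LinearMap.ext hqC
  set z := deconc x with hz
  -- vanishing of pairings on z
  have hpair : ∀ X ∈ M, ∀ Y ∈ M,
      TensorProduct.lift (bilin (Finsupp.linearCombination ℝ (sig X))
        (Finsupp.linearCombination ℝ (sig Y))) z = 0 := by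
    intro X hX Y hY
    rw [hz, lift_bilin_deconc (hpath X hX) (hpath Y hY)]
    exact mem_Idl_iff.mp hx (concat X Y) (hconc X hX Y hY)
  -- f ∘ q = f for functionals killing I
  have hfq : ∀ f : TA (Fin d) →ₗ[ℝ] ℝ, (∀ y ∈ I, f y = 0) → f ∘ₗ q = f := by
    intro f hf
    apply LinearMap.ext
    intro v
    simp only [LinearMap.coe_comp, Function.comp_apply, hqdef, LinearMap.sub_apply,
      LinearMap.id_apply, map_sub]
    rw [hf (p v) (hpI v), sub_zero]
  -- killing of (q ⊗ q) z
  have hmapqq : TensorProduct.map q q z = (0 : TensorProduct ℝ (TA (Fin d)) (TA (Fin d))) := by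
    have hcomp : TensorProduct.map q q =
        (TensorProduct.map C.subtype C.subtype) ∘ₗ (TensorProduct.map π' π') := by
      rw [← TensorProduct.map_comp, ← hqeq]
    set u₀ := TensorProduct.map π' π' z with hu₀
    set Fc : Set (↥C →ₗ[ℝ] ℝ) :=
      (fun X : RawPath (Fin d) => (Finsupp.linearCombination ℝ (sig X)).comp C.subtype) '' M
      with hFc
    have hsepC : ∀ v : ↥C, (∀ f ∈ Fc, f v = 0) → v = 0 := by
      intro v hv
      have hvI : (v : TA (Fin d)) ∈ I := by
        rw [hI, mem_Idl_iff]
        intro X hX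
        exact hv _ ⟨X, hX, rfl⟩
      have h7 := Submodule.disjoint_def.mp hC.disjoint (v : TA (Fin d)) hvI v.2
      exact Subtype.ext h7
    have huC : ∀ f ∈ Fc, ∀ g ∈ Fc, TensorProduct.lift (bilin f g) u₀ = 0 := by
      rintro f ⟨X, hX, rfl⟩ g ⟨Y, hY, rfl⟩
      set fX := Finsupp.linearCombination ℝ (sig X) with hfX
      set gY := Finsupp.linearCombination ℝ (sig Y) with hgY
      have e1 : TensorProduct.lift (bilin (V := ↥C) (fX.comp C.subtype) (gY.comp C.subtype)) u₀ =
          TensorProduct.lift (bilin fX gY) (TensorProduct.map C.subtype C.subtype u₀) := by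
        have e0 : (TensorProduct.lift (bilin fX gY)).comp
            (TensorProduct.map C.subtype C.subtype) =
            TensorProduct.lift (bilin (V := ↥C) (fX.comp C.subtype) (gY.comp C.subtype)) := by
          apply TensorProduct.ext'
          intro a b
          simp [TensorProduct.map_tmul]
        rw [← e0]; rfl
      have e2 : TensorProduct.map C.subtype C.subtype u₀ = TensorProduct.map q q z := by
        rw [hu₀, hcomp]; rfl
      have hfXI : ∀ y ∈ I, fX y = 0 := fun y hy => mem_Idl_iff.mp hy X hX
      have hgYI : ∀ y ∈ I, gY y = 0 := fun y hy => mem_Idl_iff.mp hy Y hY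
      have e3 : (TensorProduct.lift (bilin fX gY)).comp (TensorProduct.map q q) =
          TensorProduct.lift (bilin fX gY) := by
        apply TensorProduct.ext'
        intro a b
        simp only [LinearMap.coe_comp, Function.comp_apply, TensorProduct.map_tmul,
          TensorProduct.lift.tmul, bilin_apply]
        rw [show fX (q a) = fX a from LinearMap.congr_fun (hfq fX hfXI) a,
          show gY (q b) = gY b from LinearMap.congr_fun (hfq gY hgYI) b]
      have e4 : TensorProduct.lift (bilin fX gY) (TensorProduct.map q q z) =
          TensorProduct.lift (bilin fX gY) z := by
        rw [show TensorProduct.lift (bilin fX gY) (TensorProduct.map q q z) =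
          ((TensorProduct.lift (bilin fX gY)).comp (TensorProduct.map q q)) z from rfl, e3]
      rw [e1, e2, e4]
      exact hpair X hX Y hY
    have hu₀0 := separating_tensor_eq_zero (V := ↥C) Fc hsepC u₀ huC
    rw [hcomp, LinearMap.comp_apply, ← hu₀, hu₀0, map_zero]
  -- decomposition
  have hdec1 : LinearMap.rTensor (TA (Fin d)) p z + LinearMap.rTensor (TA (Fin d)) q z = z := by
    rw [← LinearMap.add_apply, ← LinearMap.rTensor_add, hpq, LinearMap.rTensor_id,
      LinearMap.id_apply]
  have hdec2 : LinearMap.lTensor (TA (Fin d)) p (LinearMap.rTensor (TA (Fin d)) q z) +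
      LinearMap.lTensor (TA (Fin d)) q (LinearMap.rTensor (TA (Fin d)) q z) =
      LinearMap.rTensor (TA (Fin d)) q z := by
    rw [← LinearMap.add_apply, ← LinearMap.lTensor_add, hpq, LinearMap.lTensor_id,
      LinearMap.id_apply]
  have hqq : LinearMap.lTensor (TA (Fin d)) q (LinearMap.rTensor (TA (Fin d)) q z) =
      TensorProduct.map q q z := by
    rw [← LinearMap.comp_apply, LinearMap.lTensor_comp_rTensor]
  have hzeq : z = LinearMap.rTensor (TA (Fin d)) p z +
      LinearMap.lTensor (TA (Fin d)) p (LinearMap.rTensor (TA (Fin d)) q z) := by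
    calc z = LinearMap.rTensor (TA (Fin d)) p z + LinearMap.rTensor (TA (Fin d)) q z :=
        hdec1.symm
    _ = LinearMap.rTensor (TA (Fin d)) p z +
        (LinearMap.lTensor (TA (Fin d)) p (LinearMap.rTensor (TA (Fin d)) q z) +
         LinearMap.lTensor (TA (Fin d)) q (LinearMap.rTensor (TA (Fin d)) q z)) := by
        rw [hdec2]
    _ = LinearMap.rTensor (TA (Fin d)) p z +
        LinearMap.lTensor (TA (Fin d)) p (LinearMap.rTensor (TA (Fin d)) q z) := by
        rw [hqq, hmapqq, add_zero]
  show z ∈ _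
  rw [hzeq]
  exact Submodule.add_mem_sup (rTensor_mem_map₂_left hpI z)
    (lTensor_mem_map₂_right hpI (LinearMap.rTensor (TA (Fin d)) q z))


end PathVarieties
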